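/- If an isomorphism-invariant binary operation ⊡ on structures is smooth with respect to a logic L having, for each quantifier rank q, only finitely many inequivalent sentences of rank ≤ q, and P is definable by an L-sentence of quantifier rank q, then the Hankel matrix H(⊡, P) has finite rank over GF(2). -/
import Mathlib


open Classical in
/-- Finite Rank Theorem, abstract form: if there is an equivalence
relation `E` on structures with finitely many classes such that the class of
`op a b` depends only on the classes of `a` and `b` (smoothness), and the property
`P` is a union of `E`-classes (definability), then the Hankel matrix of `op` and
`P` has finite rank over GF(2). -/
theorem hankel_finite_rank_of_smooth {S : Type*} (E : Setoid S) [Finite (Quotient E)]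
    (op : S → S → S)
    (hcong : ∀ a a' b b', E.r a a' → E.r b b' → E.r (op a b) (op a' b'))
    (P : Set S) (hP : ∀ a b, E.r a b → (a ∈ P ↔ b ∈ P)) :
    Module.rank (ZMod 2) (Submodule.span (ZMod 2)
        (Set.range (fun a : S => fun b : S => if op a b ∈ P then (1 : ZMod 2) else 0)))
      < Cardinal.aleph0 := by
  set f : S → (S → ZMod 2) :=
    fun a : S => fun b : S => if op a b ∈ P then (1 : ZMod 2) else 0 with hf
  have hwd : ∀ a a' : S, E.r a a' → f a = f a' := by
    intro a a' h
    funext b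
    simp only [hf]
    rw [hP _ _ (hcong a a' b b h (E.refl b))]
  obtain ⟨g, hg⟩ : ∃ g : Quotient E → (S → ZMod 2), ∀ a, g ⟦a⟧ = f a :=
    ⟨Quotient.lift f hwd, fun a => rfl⟩
  have hsub : Set.range f ⊆ Set.range g := by
    rintro _ ⟨a, rfl⟩
    exact ⟨⟦a⟧, hg a⟩
  have hfin : (Set.range f).Finite := (Set.finite_range g).subset hsub
  calc Module.rank (ZMod 2) (Submodule.span (ZMod 2) (Set.range f))
      ≤ hfin.toFinset.card := by
        have := rank_span_finset_le (R := ZMod 2) (M := S → ZMod 2) hfin.toFinset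
        rwa [hfin.coe_toFinset] at this
    _ < Cardinal.aleph0 := Cardinal.nat_lt_aleph0 _
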